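/- For any two d×d real matrices X and Y with σ_min(X) + σ_min(Y) > 0, the polar factor map P satisfies ‖P(X) − P(Y)‖ ≤ 2‖X − Y‖/(σ_min(X) + σ_min(Y)) in operator norm and ‖P(X) − P(Y)‖_F ≤ 2‖X − Y‖_F/(σ_min(X) + σ_min(Y)) in Frobenius norm. -/

import Mathlib

open MeasureTheory Matrix Filter

namespace GOPP

/-- Frobenius norm of a real matrix. -/
noncomputable def frob {α β : Type*} [Fintype α] [Fintype β] (X : Matrix α β ℝ) : ℝ :=
  Real.sqrt (∑ i, ∑ j, X i j ^ 2)

/-- Euclidean norm of a vector. -/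
noncomputable def vnorm {β : Type*} [Fintype β] (v : β → ℝ) : ℝ :=
  Real.sqrt (∑ j, v j ^ 2)

/-- Operator (spectral) norm: the supremum of ‖Xu‖ over unit vectors u. -/
noncomputable def opNorm {α β : Type*} [Fintype α] [Fintype β] (X : Matrix α β ℝ) : ℝ :=
  sSup {r : ℝ | ∃ u : β → ℝ, vnorm u = 1 ∧ r = vnorm (X.mulVec u)}

/-- Smallest singular value: the infimum of ‖uᵀX‖ over unit vectors u (for a d×m matrix
with d ≤ m this is the d-th largest singular value; for square matrices it is σ_min). -/
noncomputable def sigmaMin {α β : Type*} [Fintype α] [Fintype β] (X : Matrix α β ℝ) : ℝ :=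
  sInf {r : ℝ | ∃ u : α → ℝ, vnorm u = 1 ∧ r = vnorm (Matrix.vecMul u X)}

/-- Condition number κ = σ_max/σ_min. -/
noncomputable def kappa {d m : ℕ} (A : Matrix (Fin d) (Fin m) ℝ) : ℝ :=
  opNorm A / sigmaMin A

/-- Q is an orthogonal matrix. -/
def IsOrth {d : ℕ} (Q : Matrix (Fin d) (Fin d) ℝ) : Prop :=
  Qᵀ * Q = 1 ∧ Q * Qᵀ = 1

/-- Nuclear norm, via the dual characterization ‖M‖_* = max_{Q ∈ O(d)} ⟨Q, M⟩. -/
noncomputable def nuclearNorm {d : ℕ} (M : Matrix (Fin d) (Fin d) ℝ) : ℝ :=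
  sSup {r : ℝ | ∃ Q : Matrix (Fin d) (Fin d) ℝ, IsOrth Q ∧ r = Matrix.trace (Qᵀ * M)}

/-- The i-th d×k block of an (nd)×k block matrix. -/
def blk {n d k : ℕ} (S : Matrix (Fin n × Fin d) (Fin k) ℝ) (i : Fin n) :
    Matrix (Fin d) (Fin k) ℝ :=
  Matrix.of fun a b => S (i, a) b

/-- The i-th diagonal d×d block of an (nd)×(nd) matrix. -/
def dblk {n d : ℕ} (G : Matrix (Fin n × Fin d) (Fin n × Fin d) ℝ) (i : Fin n) :
    Matrix (Fin d) (Fin d) ℝ :=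
  Matrix.of fun a b => G (i, a) (i, b)

/-- S ∈ O(d)^{⊗n}: each of the n d×d blocks of S is orthogonal. -/
def OrthBlocks {n d : ℕ} (S : Matrix (Fin n × Fin d) (Fin d) ℝ) : Prop :=
  ∀ i, IsOrth (blk S i)

/-- Z ∈ ℝ^{nd×d}: the vertical stack of n copies of I_d. -/
def ZStack (n d : ℕ) : Matrix (Fin n × Fin d) (Fin d) ℝ :=
  Matrix.of fun p j => if p.2 = j then 1 else 0

/-- Vertical stack of n given d×k matrices. -/
def stack {n d k : ℕ} (B : Fin n → Matrix (Fin d) (Fin k) ℝ) :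
    Matrix (Fin n × Fin d) (Fin k) ℝ :=
  Matrix.of fun p b => B p.1 p.2 b

/-- d_F(X,Y) = min_{Q ∈ O(d)} ‖X − YQ‖_F. -/
noncomputable def dF {n d : ℕ} (X Y : Matrix (Fin n × Fin d) (Fin d) ℝ) : ℝ :=
  sInf {r : ℝ | ∃ Q, IsOrth Q ∧ r = frob (X - Y * Q)}

/-- R is a polar factor P(X) of X: an orthogonal global minimizer of ‖X − Q‖_F over O(d). -/
def IsPolar {d : ℕ} (X R : Matrix (Fin d) (Fin d) ℝ) : Prop :=
  IsOrth R ∧ ∀ Q : Matrix (Fin d) (Fin d) ℝ, IsOrth Q → frob (X - R) ≤ frob (X - Q)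

/-- S = P_n(X): blockwise polar factor. -/
def IsPolarBlocks {n d : ℕ} (X S : Matrix (Fin n × Fin d) (Fin d) ℝ) : Prop :=
  ∀ i, IsPolar (blk X i) (blk S i)

/-- U collects (an orthonormal basis of the span of) the top d left singular vectors of D:
U has orthonormal columns and maximizes the Ky Fan quantity trace(Uᵀ(DDᵀ)U). -/
def IsTopSingVecs {N : Type*} [Fintype N] {d m : ℕ} (D : Matrix N (Fin m) ℝ)
    (U : Matrix N (Fin d) ℝ) : Prop :=
  Uᵀ * U = 1 ∧ ∀ Q : Matrix N (Fin d) ℝ, Qᵀ * Q = 1 →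
    Matrix.trace (Qᵀ * (D * Dᵀ) * Q) ≤ Matrix.trace (Uᵀ * (D * Dᵀ) * U)

/-- (U, S, V) is a top-d singular triple of D: orthonormal U, V, diagonal nonnegative S,
DV = US, DᵀU = VS, and U spans a top-d left singular subspace. -/
def IsSVDTriple {N : Type*} [Fintype N] {d m : ℕ} (D : Matrix N (Fin m) ℝ)
    (U : Matrix N (Fin d) ℝ) (S : Matrix (Fin d) (Fin d) ℝ)
    (V : Matrix (Fin m) (Fin d) ℝ) : Prop :=
  Vᵀ * V = 1 ∧ (∀ a b, a ≠ b → S a b = 0) ∧ (∀ a, 0 ≤ S a a) ∧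
    D * V = U * S ∧ Dᵀ * U = V * S ∧ IsTopSingVecs D U

/-- The generalized power method sequence with spectral initialization, run on the data
matrix D (so with C = DDᵀ): S⁰ = P_n(U) for top singular vectors U of D, and
S^{t+1} = P_n(C Sᵗ). -/
def IsGPM {n d m : ℕ} (D : Matrix (Fin n × Fin d) (Fin m) ℝ)
    (S : ℕ → Matrix (Fin n × Fin d) (Fin d) ℝ) : Prop :=
  (∃ U, IsTopSingVecs D U ∧ IsPolarBlocks U (S 0)) ∧
    ∀ t, IsPolarBlocks (D * Dᵀ * S t) (S (t + 1))

/-- W^(i): W with its i-th block row replaced by 0. -/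
def mask {n d m : ℕ} (W : Matrix (Fin n × Fin d) (Fin m) ℝ) (i : Fin n) :
    Matrix (Fin n × Fin d) (Fin m) ℝ :=
  Matrix.of fun p b => if p.1 = i then 0 else W p b

/-- The noise matrix Δ = WAᵀZᵀ + ZAWᵀ + σWWᵀ. -/
noncomputable def delta {n d m : ℕ} (A : Matrix (Fin d) (Fin m) ℝ)
    (W : Matrix (Fin n × Fin d) (Fin m) ℝ) (σ : ℝ) :
    Matrix (Fin n × Fin d) (Fin n × Fin d) ℝ :=
  W * Aᵀ * (ZStack n d)ᵀ + ZStack n d * A * Wᵀ + σ • (W * Wᵀ)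

/-- The i-th block column Δ_i = WAᵀ + ZAW_iᵀ + σWW_iᵀ of Δ. -/
noncomputable def deltaCol {n d m : ℕ} (A : Matrix (Fin d) (Fin m) ℝ)
    (W : Matrix (Fin n × Fin d) (Fin m) ℝ) (σ : ℝ) (i : Fin n) :
    Matrix (Fin n × Fin d) (Fin d) ℝ :=
  W * Aᵀ + ZStack n d * A * (blk W i)ᵀ + σ • (W * (blk W i)ᵀ)

/-- The operator L S = C S/(n‖A‖²) with C = ZAAᵀZᵀ + σΔ. -/
noncomputable def Lop {n d m : ℕ} (A : Matrix (Fin d) (Fin m) ℝ)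
    (W : Matrix (Fin n × Fin d) (Fin m) ℝ) (σ : ℝ)
    (S : Matrix (Fin n × Fin d) (Fin d) ℝ) : Matrix (Fin n × Fin d) (Fin d) ℝ :=
  ((n : ℝ) * opNorm A ^ 2)⁻¹ •
    ((ZStack n d * A * Aᵀ * (ZStack n d)ᵀ + σ • delta A W σ) * S)

/-- √(nd) + √m + √(2γ n log n). -/
noncomputable def bnd1 (n d m : ℕ) (γ : ℝ) : ℝ :=
  Real.sqrt ((n : ℝ) * d) + Real.sqrt (m : ℝ) + Real.sqrt (2 * γ * n * Real.log n)

/-- √(nd) + √m + √(2γ log n). -/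
noncomputable def bnd2 (n d m : ℕ) (γ : ℝ) : ℝ :=
  Real.sqrt ((n : ℝ) * d) + Real.sqrt (m : ℝ) + Real.sqrt (2 * γ * Real.log n)

/-- The basin of attraction N_ε. -/
def memNeps {n d : ℕ} (ε : ℝ) (S : Matrix (Fin n × Fin d) (Fin d) ℝ) : Prop :=
  OrthBlocks S ∧ dF S (ZStack n d) ≤ ε * Real.sqrt ((n : ℝ) * d)

/-- The basin of attraction N_{ξ,∞}. -/
def memNxi {n d m : ℕ} (W : Matrix (Fin n × Fin d) (Fin m) ℝ) (γ ξ : ℝ)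
    (S : Matrix (Fin n × Fin d) (Fin d) ℝ) : Prop :=
  OrthBlocks S ∧ ∀ i, frob (blk W i * Wᵀ * S) ≤ ξ * Real.sqrt (d : ℝ) * bnd1 n d m γ ^ 2

/-- The distribution of a matrix with i.i.d. standard Gaussian N(0,1) entries. -/
noncomputable def stdGaussian (ι κ : Type*) [Fintype ι] [Fintype κ] :
    Measure (ι → κ → ℝ) :=
  Measure.pi fun _ : ι => Measure.pi fun _ : κ => ProbabilityTheory.gaussianReal 0 1

section base
variable {α β : Type*} [Fintype α] [Fintype β]

lemma vnorm_nonneg (v : β → ℝ) : 0 ≤ vnorm v := Real.sqrt_nonneg _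

lemma dot_self_nonneg (v : β → ℝ) : 0 ≤ v ⬝ᵥ v :=
  Finset.sum_nonneg fun i _ => mul_self_nonneg _

lemma vnorm_eq_dot (v : β → ℝ) : vnorm v = Real.sqrt (v ⬝ᵥ v) := by
  simp [vnorm, dotProduct, sq]

lemma vnorm_sq (v : β → ℝ) : vnorm v ^ 2 = v ⬝ᵥ v := by
  rw [vnorm_eq_dot, Real.sq_sqrt (dot_self_nonneg v)]

lemma vnorm_eq_zero {v : β → ℝ} (h : vnorm v = 0) : v = 0 := by
  have h2 : v ⬝ᵥ v = 0 := by
    have := vnorm_sq v; rw [h] at this; simpa using this.symm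
  funext i
  have : ∀ j ∈ Finset.univ, 0 ≤ v j * v j := fun j _ => mul_self_nonneg _
  have hz := (Finset.sum_eq_zero_iff_of_nonneg this).1 h2 i (Finset.mem_univ i)
  exact (mul_self_eq_zero).1 hz

lemma vnorm_smul (c : ℝ) (v : β → ℝ) : vnorm (c • v) = |c| * vnorm v := by
  simp only [vnorm, Pi.smul_apply, smul_eq_mul, mul_pow]
  rw [← Finset.mul_sum, Real.sqrt_mul (sq_nonneg c), Real.sqrt_sq_eq_abs]

lemma abs_dot_le (v w : β → ℝ) : |v ⬝ᵥ w| ≤ vnorm v * vnorm w := by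
  have h := Finset.sum_mul_sq_le_sq_mul_sq Finset.univ v w
  have e1 : (∑ j, v j ^ 2) = v ⬝ᵥ v := by simp [dotProduct, sq]
  have e2 : (∑ j, w j ^ 2) = w ⬝ᵥ w := by simp [dotProduct, sq]
  have hs : (v ⬝ᵥ w) ^ 2 ≤ (vnorm v * vnorm w) ^ 2 := by
    rw [mul_pow, vnorm_sq, vnorm_sq]
    calc (v ⬝ᵥ w) ^ 2 = (∑ j, v j * w j) ^ 2 := by rfl
      _ ≤ (∑ j, v j ^ 2) * (∑ j, w j ^ 2) := h
      _ = (v ⬝ᵥ v) * (w ⬝ᵥ w) := by rw [e1, e2]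
  have hnn : 0 ≤ vnorm v * vnorm w := mul_nonneg (vnorm_nonneg v) (vnorm_nonneg w)
  rw [abs_le]
  constructor <;> nlinarith [hs, hnn]

lemma vnorm_mono {v w : β → ℝ} (h : ∀ j, |v j| ≤ |w j|) : vnorm v ≤ vnorm w := by
  apply Real.sqrt_le_sqrt
  apply Finset.sum_le_sum
  intro j _
  calc v j ^ 2 = |v j| ^ 2 := (sq_abs _).symm
    _ ≤ |w j| ^ 2 := by apply pow_le_pow_left₀ (abs_nonneg _) (h j) 2
    _ = w j ^ 2 := sq_abs _

lemma vnorm_add_le (v w : β → ℝ) : vnorm (v + w) ≤ vnorm v + vnorm w := by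
  have key : (v + w) ⬝ᵥ (v + w) ≤ (vnorm v + vnorm w) ^ 2 := by
    have hd : (v + w) ⬝ᵥ (v + w) = v ⬝ᵥ v + 2 * (v ⬝ᵥ w) + w ⬝ᵥ w := by
      simp [add_dotProduct, dotProduct_add, dotProduct_comm w v]; ring
    have hcs := (abs_le.1 (abs_dot_le v w)).2
    have h1 := vnorm_sq v; have h2 := vnorm_sq w
    nlinarith [vnorm_nonneg v, vnorm_nonneg w]
  rw [vnorm_eq_dot]
  calc Real.sqrt ((v+w) ⬝ᵥ (v+w)) ≤ Real.sqrt ((vnorm v + vnorm w) ^ 2) :=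
        Real.sqrt_le_sqrt key
    _ = vnorm v + vnorm w := by
        rw [Real.sqrt_sq (by have := vnorm_nonneg v; have := vnorm_nonneg w; linarith)]

lemma dot_mulVec_orth {d : ℕ} {Q : Matrix (Fin d) (Fin d) ℝ} (h : Qᵀ * Q = 1)
    (u : Fin d → ℝ) : (Q *ᵥ u) ⬝ᵥ (Q *ᵥ u) = u ⬝ᵥ u := by
  conv_lhs => rw [dotProduct_mulVec, ← mulVec_transpose, mulVec_mulVec, h, one_mulVec]

lemma vnorm_mulVec_orth {d : ℕ} {Q : Matrix (Fin d) (Fin d) ℝ} (h : Qᵀ * Q = 1)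
    (u : Fin d → ℝ) : vnorm (Q *ᵥ u) = vnorm u := by
  rw [vnorm_eq_dot, vnorm_eq_dot, dot_mulVec_orth h]

end base

section frob
variable {α β : Type*} [Fintype α] [Fintype β]

lemma frob_nonneg (M : Matrix α β ℝ) : 0 ≤ frob M := Real.sqrt_nonneg _

lemma frob_eq_vnorm (M : Matrix α β ℝ) : frob M = vnorm (fun p : α × β => M p.1 p.2) := by
  rw [frob, vnorm, Fintype.sum_prod_type]

lemma frob_eq_sqrt_trace {d e : ℕ} (M : Matrix (Fin d) (Fin e) ℝ) :
    frob M = Real.sqrt (Matrix.trace (Mᵀ * M)) := by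
  rw [frob]
  congr 1
  rw [Matrix.trace]
  simp only [Matrix.diag, Matrix.mul_apply, Matrix.transpose_apply]
  rw [Finset.sum_comm]
  congr 1; ext i; congr 1; ext j; rw [sq]

lemma frob_mul_orthL {d e : ℕ} {Q : Matrix (Fin d) (Fin d) ℝ} (h : Qᵀ * Q = 1)
    (M : Matrix (Fin d) (Fin e) ℝ) : frob (Q * M) = frob M := by
  rw [frob_eq_sqrt_trace, frob_eq_sqrt_trace]
  congr 2
  rw [Matrix.transpose_mul, Matrix.mul_assoc, ← Matrix.mul_assoc Qᵀ, h, Matrix.one_mul]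

lemma frob_mul_orthR {d e : ℕ} {Q : Matrix (Fin d) (Fin d) ℝ} (h : Q * Qᵀ = 1)
    (M : Matrix (Fin e) (Fin d) ℝ) : frob (M * Q) = frob M := by
  rw [frob_eq_sqrt_trace, frob_eq_sqrt_trace]
  congr 1
  rw [Matrix.transpose_mul, Matrix.mul_assoc, Matrix.trace_mul_comm, Matrix.mul_assoc,
    Matrix.mul_assoc, h, Matrix.mul_one]

lemma frob_transpose {d e : ℕ} (M : Matrix (Fin d) (Fin e) ℝ) : frob Mᵀ = frob M := by
  rw [frob_eq_sqrt_trace, frob_eq_sqrt_trace, Matrix.transpose_transpose,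
    Matrix.trace_mul_comm]

lemma frob_add_le (A B : Matrix α β ℝ) : frob (A + B) ≤ frob A + frob B := by
  rw [frob_eq_vnorm, frob_eq_vnorm, frob_eq_vnorm]
  exact vnorm_add_le _ _

lemma frob_sub_le (A B : Matrix α β ℝ) : frob (A - B) ≤ frob A + frob B := by
  have h := frob_add_le A (-B)
  have e1 : A + (-B) = A - B := by abel
  have e2 : frob (-B) = frob B := by
    rw [frob, frob]; congr 1; congr 1; ext i; congr 1; ext j
    simp [Matrix.neg_apply]
  rw [e1, e2] at h
  exact h

end frob

section op
variable {α β : Type*} [Fintype α] [Fintype β]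

lemma vnorm_mulVec_le_frob (M : Matrix α β ℝ) (u : β → ℝ) :
    vnorm (M *ᵥ u) ≤ frob M * vnorm u := by
  have key : ∀ i, (M *ᵥ u) i ^ 2 ≤ (∑ j, M i j ^ 2) * (∑ j, u j ^ 2) := by
    intro i
    exact Finset.sum_mul_sq_le_sq_mul_sq Finset.univ (fun j => M i j) u
  have h2 : (∑ i, (M *ᵥ u) i ^ 2) ≤ (∑ i, ∑ j, M i j ^ 2) * (∑ j, u j ^ 2) := by
    rw [Finset.sum_mul]
    exact Finset.sum_le_sum fun i _ => key i
  calc vnorm (M *ᵥ u) = Real.sqrt (∑ i, (M *ᵥ u) i ^ 2) := rfl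
    _ ≤ Real.sqrt ((∑ i, ∑ j, M i j ^ 2) * (∑ j, u j ^ 2)) := Real.sqrt_le_sqrt h2
    _ = frob M * vnorm u := by
        rw [Real.sqrt_mul (by positivity)]; rfl

lemma opNorm_bddAbove (M : Matrix α β ℝ) :
    BddAbove {r : ℝ | ∃ u : β → ℝ, vnorm u = 1 ∧ r = vnorm (M.mulVec u)} := by
  refine ⟨frob M, ?_⟩
  rintro r ⟨u, hu, rfl⟩
  simpa [hu] using vnorm_mulVec_le_frob M u

lemma opNorm_nonneg (M : Matrix α β ℝ) : 0 ≤ opNorm M := by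
  apply Real.sSup_nonneg
  rintro r ⟨u, hu, rfl⟩
  exact vnorm_nonneg _

lemma vnorm_mulVec_le_opNorm (M : Matrix α β ℝ) {u : β → ℝ} (hu : vnorm u = 1) :
    vnorm (M *ᵥ u) ≤ opNorm M :=
  le_csSup (opNorm_bddAbove M) ⟨u, hu, rfl⟩

lemma vnorm_mulVec_le_opNorm' (M : Matrix α β ℝ) (u : β → ℝ) :
    vnorm (M *ᵥ u) ≤ opNorm M * vnorm u := by
  rcases eq_or_ne (vnorm u) 0 with h | h
  · rw [vnorm_eq_zero h]
    have h0 : vnorm (0 : α → ℝ) = 0 := by simp [vnorm]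
    have h1 : vnorm (0 : β → ℝ) = 0 := by simp [vnorm]
    simp only [Matrix.mulVec_zero, h0, h1, mul_zero, le_refl]
  · have hpos : 0 < vnorm u := lt_of_le_of_ne (vnorm_nonneg u) (Ne.symm h)
    have hu' : vnorm ((vnorm u)⁻¹ • u) = 1 := by
      rw [vnorm_smul, abs_of_pos (by positivity)]
      field_simp
    have := vnorm_mulVec_le_opNorm M hu'
    rw [Matrix.mulVec_smul, vnorm_smul, abs_of_pos (by positivity)] at this
    calc vnorm (M *ᵥ u) = vnorm u * ((vnorm u)⁻¹ * vnorm (M *ᵥ u)) := by field_simp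
      _ ≤ vnorm u * opNorm M := by
          apply mul_le_mul_of_nonneg_left this hpos.le
      _ = opNorm M * vnorm u := mul_comm _ _

lemma opNorm_le {M : Matrix α β ℝ} {B : ℝ}
    (h : ∀ u : β → ℝ, vnorm u = 1 → vnorm (M *ᵥ u) ≤ B) (hB : 0 ≤ B) : opNorm M ≤ B := by
  apply Real.sSup_le _ hB
  rintro r ⟨u, hu, rfl⟩
  exact h u hu

lemma sigmaMin_nonneg (M : Matrix α β ℝ) : 0 ≤ sigmaMin M := by
  apply Real.sInf_nonneg
  rintro r ⟨u, hu, rfl⟩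
  exact vnorm_nonneg _

lemma sigmaMin_le (M : Matrix α β ℝ) {u : α → ℝ} (hu : vnorm u = 1) :
    sigmaMin M ≤ vnorm (u ᵥ* M) := by
  apply csInf_le
  · refine ⟨0, ?_⟩
    rintro r ⟨w, hw, rfl⟩
    exact vnorm_nonneg _
  · exact ⟨u, hu, rfl⟩

end op

section orth
variable {d : ℕ}

lemma IsOrth.mul {Q R : Matrix (Fin d) (Fin d) ℝ} (hQ : IsOrth Q) (hR : IsOrth R) :
    IsOrth (Q * R) := by
  constructor
  · rw [Matrix.transpose_mul, Matrix.mul_assoc, ← Matrix.mul_assoc Qᵀ, hQ.1,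
      Matrix.one_mul, hR.1]
  · rw [Matrix.transpose_mul, Matrix.mul_assoc, ← Matrix.mul_assoc R, hR.2,
      Matrix.one_mul, hQ.2]

lemma IsOrth.transpose {Q : Matrix (Fin d) (Fin d) ℝ} (hQ : IsOrth Q) : IsOrth Qᵀ := by
  refine ⟨?_, ?_⟩ <;> rw [Matrix.transpose_transpose]
  exacts [hQ.2, hQ.1]

lemma trace_vecMulVec_mul (a b : Fin d → ℝ) (M : Matrix (Fin d) (Fin d) ℝ) :
    Matrix.trace (Matrix.vecMulVec a b * M) = b ⬝ᵥ (M *ᵥ a) := by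
  simp only [Matrix.trace, Matrix.diag, Matrix.mul_apply, Matrix.vecMulVec_apply,
    dotProduct, Matrix.mulVec, Finset.mul_sum]
  rw [Finset.sum_comm]
  apply Finset.sum_congr rfl; intro k _
  apply Finset.sum_congr rfl; intro i _
  ring

lemma vecMulVec_mul_vecMulVec (a b c e : Fin d → ℝ) :
    Matrix.vecMulVec a b * Matrix.vecMulVec c e = (b ⬝ᵥ c) • Matrix.vecMulVec a e := by
  ext i j
  simp only [Matrix.mul_apply, Matrix.vecMulVec_apply, Matrix.smul_apply, dotProduct,
    smul_eq_mul, Finset.sum_mul]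
  apply Finset.sum_congr rfl; intro k _
  ring

noncomputable def hh {d : ℕ} (u : Fin d → ℝ) : Matrix (Fin d) (Fin d) ℝ :=
  1 - (2:ℝ) • Matrix.vecMulVec u u

lemma hh_transpose (u : Fin d → ℝ) : (hh u)ᵀ = hh u := by
  have : (Matrix.vecMulVec u u)ᵀ = Matrix.vecMulVec u u := by
    ext i j; simp [Matrix.vecMulVec_apply, mul_comm]
  simp [hh, Matrix.transpose_sub, Matrix.transpose_smul, this]

lemma hh_mul_self {u : Fin d → ℝ} (hu : u ⬝ᵥ u = 1) : hh u * hh u = 1 := by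
  have hP : Matrix.vecMulVec u u * Matrix.vecMulVec u u = Matrix.vecMulVec u u := by
    rw [vecMulVec_mul_vecMulVec, hu, one_smul]
  simp only [hh, Matrix.sub_mul, Matrix.mul_sub, Matrix.one_mul, Matrix.mul_one,
    Matrix.smul_mul, Matrix.mul_smul, hP, smul_smul]
  module

lemma hh_isOrth {u : Fin d → ℝ} (hu : vnorm u = 1) : IsOrth (hh u) := by
  have hd : u ⬝ᵥ u = 1 := by rw [← vnorm_sq, hu]; norm_num
  refine ⟨?_, ?_⟩ <;> rw [hh_transpose] <;> exact hh_mul_self hd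

lemma trace_hh_mul (u : Fin d → ℝ) (H : Matrix (Fin d) (Fin d) ℝ) :
    Matrix.trace (hh u * H) = Matrix.trace H - 2 * (u ⬝ᵥ (H *ᵥ u)) := by
  rw [hh, Matrix.sub_mul, Matrix.smul_mul, Matrix.one_mul, Matrix.trace_sub,
    Matrix.trace_smul, trace_vecMulVec_mul]
  simp

lemma trace_hh_hh_mul (u w : Fin d → ℝ) (H : Matrix (Fin d) (Fin d) ℝ) :
    Matrix.trace (hh u * hh w * H) =
      Matrix.trace H - 2 * (u ⬝ᵥ (H *ᵥ u)) - 2 * (w ⬝ᵥ (H *ᵥ w))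
        + 4 * (u ⬝ᵥ w) * (w ⬝ᵥ (H *ᵥ u)) := by
  have expand : hh u * hh w = 1 - (2:ℝ) • Matrix.vecMulVec u u - (2:ℝ) • Matrix.vecMulVec w w
      + (4 * (u ⬝ᵥ w)) • Matrix.vecMulVec u w := by
    simp only [hh, Matrix.sub_mul, Matrix.mul_sub, Matrix.one_mul, Matrix.mul_one,
      Matrix.smul_mul, Matrix.mul_smul, vecMulVec_mul_vecMulVec, smul_smul]
    module
  rw [expand]
  simp only [Matrix.add_mul, Matrix.sub_mul, Matrix.smul_mul, Matrix.one_mul,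
    Matrix.trace_add, Matrix.trace_sub, Matrix.trace_smul, trace_vecMulVec_mul,
    smul_eq_mul]
  try ring

end orth

section polar
variable {d : ℕ} {X U : Matrix (Fin d) (Fin d) ℝ}

lemma trace_transpose_mul_nonneg (M : Matrix (Fin d) (Fin d) ℝ) :
    0 ≤ Matrix.trace (Mᵀ * M) := by
  rw [Matrix.trace]
  apply Finset.sum_nonneg
  intro j _
  simp only [Matrix.diag, Matrix.mul_apply, Matrix.transpose_apply]
  exact Finset.sum_nonneg fun i _ => mul_self_nonneg _

lemma frob_sq_trace (M : Matrix (Fin d) (Fin d) ℝ) :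
    frob M ^ 2 = Matrix.trace (Mᵀ * M) := by
  rw [frob_eq_sqrt_trace, Real.sq_sqrt (trace_transpose_mul_nonneg M)]

lemma polar_trace (hP : IsPolar X U) {Q : Matrix (Fin d) (Fin d) ℝ} (hQ : IsOrth Q) :
    Matrix.trace (Qᵀ * X) ≤ Matrix.trace (Uᵀ * X) := by
  have h := hP.2 Q hQ
  have hsq : frob (X - U) ^ 2 ≤ frob (X - Q) ^ 2 :=
    pow_le_pow_left₀ (frob_nonneg _) h 2
  rw [frob_sq_trace, frob_sq_trace] at hsq
  have expand : ∀ R : Matrix (Fin d) (Fin d) ℝ, Rᵀ * R = 1 →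
      Matrix.trace ((X - R)ᵀ * (X - R)) =
        Matrix.trace (Xᵀ * X) - 2 * Matrix.trace (Rᵀ * X) + d := by
    intro R hR
    rw [Matrix.transpose_sub, Matrix.sub_mul, Matrix.mul_sub, Matrix.mul_sub, hR]
    have htr : Matrix.trace (Xᵀ * R) = Matrix.trace (Rᵀ * X) := by
      rw [← Matrix.trace_transpose (Xᵀ * R), Matrix.transpose_mul, Matrix.transpose_transpose]
    rw [Matrix.trace_sub, Matrix.trace_sub, Matrix.trace_sub, htr, Matrix.trace_one]
    simp [Finset.card_univ]
    ring
  rw [expand U hP.1.1, expand Q hQ.1] at hsq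
  linarith

lemma polar_psd (hP : IsPolar X U) (u : Fin d → ℝ) : 0 ≤ u ⬝ᵥ ((Uᵀ * X) *ᵥ u) := by
  rcases eq_or_ne (vnorm u) 0 with h | h
  · rw [vnorm_eq_zero h]; simp
  · have hpos : 0 < vnorm u := lt_of_le_of_ne (vnorm_nonneg u) (Ne.symm h)
    set c := (vnorm u)⁻¹ with hc
    have hcpos : 0 < c := by positivity
    have hu' : vnorm (c • u) = 1 := by
      rw [vnorm_smul, abs_of_pos hcpos, hc]; field_simp
    have hQ : IsOrth (U * hh (c • u)) := hP.1.mul (hh_isOrth hu')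
    have htr := polar_trace hP hQ
    have heq : (U * hh (c • u))ᵀ * X = hh (c • u) * (Uᵀ * X) := by
      rw [Matrix.transpose_mul, hh_transpose, Matrix.mul_assoc]
    rw [heq, trace_hh_mul] at htr
    have hd : 0 ≤ (c • u) ⬝ᵥ ((Uᵀ * X) *ᵥ (c • u)) := by linarith
    have hexp : (c • u) ⬝ᵥ ((Uᵀ * X) *ᵥ (c • u)) = c ^ 2 * (u ⬝ᵥ ((Uᵀ * X) *ᵥ u)) := by
      rw [Matrix.mulVec_smul, smul_dotProduct, dotProduct_smul]
      simp [smul_eq_mul]; ring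
    rw [hexp] at hd
    have hc2 : 0 < c ^ 2 := by positivity
    by_contra hneg
    push_neg at hneg
    nlinarith [hd, hc2, hneg]

lemma cancel_aux {x K : ℝ} (hK : 0 ≤ K) (h : ∀ t : ℝ, t * (x : ℝ) ≤ t ^ 2 * K) : x = 0 := by
  by_contra hx
  have hx2 : 0 < x ^ 2 := by positivity
  have hK1 : (0:ℝ) < K + 1 := by linarith
  have ht := h (x / (K + 1))
  rw [div_mul_eq_mul_div, div_pow, div_mul_eq_mul_div] at ht
  rw [div_le_div_iff₀ hK1 (by positivity)] at ht
  have : (x * x) * (K+1)^2 ≤ x^2 * K * (K+1) := by nlinarith [ht]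
  nlinarith [this, hx2, hK1]

lemma polar_symm (hP : IsPolar X U) : (Uᵀ * X)ᵀ = Uᵀ * X := by
  set H := Uᵀ * X with hH
  ext i j
  rcases eq_or_ne i j with rfl | hij
  · rfl
  · show H j i = H i j
    set u : Fin d → ℝ := Pi.single j (1:ℝ) with hu
    set v : Fin d → ℝ := Pi.single i (1:ℝ) with hv
    -- b = v ⬝ᵥ H *ᵥ u = H i j ; c = u ⬝ᵥ H *ᵥ v = H j i
    have hudot : u ⬝ᵥ u = 1 := by simp [hu, dotProduct, Pi.single_apply]
    have hvdot : v ⬝ᵥ v = 1 := by simp [hv, dotProduct, Pi.single_apply]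
    have huv : u ⬝ᵥ v = 0 := by
      simpa [hu, hv, dotProduct, Pi.single_apply] using hij
    set a := u ⬝ᵥ (H *ᵥ u) with ha
    set b := v ⬝ᵥ (H *ᵥ u) with hb
    set c := u ⬝ᵥ (H *ᵥ v) with hcc
    set e := v ⬝ᵥ (H *ᵥ v) with he
    have hbval : b = H i j := by
      simp [hb, hu, hv, dotProduct, Matrix.mulVec, Pi.single_apply]
    have hcval : c = H j i := by
      simp [hcc, hu, hv, dotProduct, Matrix.mulVec, Pi.single_apply]
    have hae : 0 ≤ a := polar_psd hP u
    have hee : 0 ≤ e := polar_psd hP v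
    have key : ∀ t : ℝ, t * (b - c) ≤ t ^ 2 * (a + e) := by
      intro t
      have h1t : (0:ℝ) < 1 + t ^ 2 := by positivity
      set s := Real.sqrt (1 + t ^ 2) with hs
      have hspos : 0 < s := Real.sqrt_pos.2 h1t
      set c0 := s⁻¹ with hc0
      have hc0pos : 0 < c0 := by positivity
      set w : Fin d → ℝ := c0 • (u + t • v) with hw
      have hwnorm : vnorm w = 1 := by
        rw [hw, vnorm_smul, abs_of_pos hc0pos, vnorm_eq_dot]
        have : (u + t • v) ⬝ᵥ (u + t • v) = 1 + t ^ 2 := by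
          simp only [add_dotProduct, dotProduct_add, smul_dotProduct, dotProduct_smul,
            smul_eq_mul, hudot, hvdot, huv]
          have hvu : v ⬝ᵥ u = 0 := by rw [dotProduct_comm]; exact huv
          rw [hvu]; ring
        rw [this, ← hs, hc0]
        field_simp
      have hQ : IsOrth (U * (hh w * hh u)) :=
        hP.1.mul ((hh_isOrth hwnorm).mul (hh_isOrth (by rw [vnorm_eq_dot, hudot]; simp)))
      have htr := polar_trace hP hQ
      have heq : (U * (hh w * hh u))ᵀ * X = hh u * hh w * H := by
        rw [Matrix.transpose_mul, Matrix.transpose_mul, hh_transpose, hh_transpose,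
          Matrix.mul_assoc, Matrix.mul_assoc]
      rw [heq, trace_hh_hh_mul] at htr
      -- htr : trace H - 2*(u ⬝ᵥ H*ᵥu) - 2*(w ⬝ᵥ H*ᵥw) + 4*(u⬝ᵥw)*(w⬝ᵥH*ᵥu) ≤ trace H
      have hineq : 4 * (u ⬝ᵥ w) * (w ⬝ᵥ (H *ᵥ u)) ≤ 2 * a + 2 * (w ⬝ᵥ (H *ᵥ w)) := by
        rw [ha]; linarith
      -- expand w
      have e1 : u ⬝ᵥ w = c0 := by
        rw [hw]
        simp only [dotProduct_smul, dotProduct_add, smul_eq_mul, hudot]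
        try rw [huv]
        try ring
      have e2 : w ⬝ᵥ (H *ᵥ u) = c0 * (a + t * b) := by
        rw [hw]
        simp only [smul_dotProduct, add_dotProduct, smul_eq_mul]
        try rw [ha, hb]
        try ring
      have e3 : w ⬝ᵥ (H *ᵥ w) = c0 ^ 2 * (a + t * c + t * b + t ^ 2 * e) := by
        rw [hw]
        simp only [Matrix.mulVec_smul, Matrix.mulVec_add, smul_dotProduct,
          dotProduct_smul, dotProduct_add, add_dotProduct, smul_eq_mul]
        try rw [ha, hb, hcc, he]
        try ring
      rw [e1, e2, e3] at hineq
      have hc0sq : c0 ^ 2 * (1 + t ^ 2) = 1 := by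
        rw [hc0, hs]
        rw [← Real.sqrt_inv]
        rw [Real.sq_sqrt (by positivity)]
        field_simp
      nlinarith [hineq, hc0sq, sq_nonneg c0, h1t, mul_pos hc0pos hc0pos]
    have := cancel_aux (by linarith : (0:ℝ) ≤ a + e) key
    rw [hbval, hcval] at this
    linarith [this]

end polar

section spectral
variable {d : ℕ} {X U : Matrix (Fin d) (Fin d) ℝ}

lemma isHermitian_of_transpose {H : Matrix (Fin d) (Fin d) ℝ} (h : Hᵀ = H) :
    H.IsHermitian := by
  rw [Matrix.IsHermitian, Matrix.conjTranspose, h]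
  ext i j; simp

lemma polar_spectral (hP : IsPolar X U) :
    ∃ (P : Matrix (Fin d) (Fin d) ℝ) (lam : Fin d → ℝ),
      IsOrth P ∧ Uᵀ * X = P * Matrix.diagonal lam * Pᵀ ∧
        ∀ k, sigmaMin X ≤ lam k := by
  set H := Uᵀ * X with hHdef
  have hsym : Hᵀ = H := polar_symm hP
  have hH : H.IsHermitian := isHermitian_of_transpose hsym
  set P : Matrix (Fin d) (Fin d) ℝ :=
    (Matrix.IsHermitian.eigenvectorUnitary hH : Matrix (Fin d) (Fin d) ℝ) with hPdef
  set lam : Fin d → ℝ := hH.eigenvalues with hlam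
  have hPo1 : Pᵀ * P = 1 := by
    have h2 := (Matrix.IsHermitian.eigenvectorUnitary hH).2
    rw [Matrix.mem_unitaryGroup_iff'] at h2
    simpa [Matrix.star_eq_conjTranspose, Matrix.conjTranspose_eq_transpose_of_trivial] using h2
  have hPo2 : P * Pᵀ = 1 := by
    have h2 := (Matrix.IsHermitian.eigenvectorUnitary hH).2
    rw [Matrix.mem_unitaryGroup_iff] at h2
    simpa [Matrix.star_eq_conjTranspose, Matrix.conjTranspose_eq_transpose_of_trivial] using h2
  have hspec : H = P * Matrix.diagonal lam * Pᵀ := by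
    have h1 := hH.spectral_theorem
    simpa [Matrix.star_eq_conjTranspose, Matrix.conjTranspose_eq_transpose_of_trivial] using h1
  refine ⟨P, lam, ⟨hPo1, hPo2⟩, hspec, ?_⟩
  intro k
  -- the k-th column of P is a unit eigenvector of H for lam k
  set p : Fin d → ℝ := fun i => P i k with hp
  have hpdot : p ⬝ᵥ p = 1 := by
    have := congrArg (fun M => M k k) hPo1
    simp only [Matrix.mul_apply, Matrix.transpose_apply, Matrix.one_apply_eq] at this
    simpa [hp, dotProduct] using this
  have hpnorm : vnorm p = 1 := by rw [vnorm_eq_dot, hpdot]; simp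
  have heig : H *ᵥ p = lam k • p := by
    have hHP : H * P = P * Matrix.diagonal lam := by
      rw [hspec, Matrix.mul_assoc, hPo1, Matrix.mul_one]
    funext i
    have h1 : (H * P) i k = (P * Matrix.diagonal lam) i k := by rw [hHP]
    rw [Matrix.mul_diagonal] at h1
    have h2 : (H *ᵥ p) i = (H * P) i k := by
      simp [hp, Matrix.mulVec, Matrix.mul_apply, dotProduct]
    rw [h2, h1]
    simp [hp, mul_comm]
  have hlam_nonneg : 0 ≤ lam k := by
    have := polar_psd hP p
    rw [← hHdef, heig, dotProduct_smul, hpdot] at this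
    simpa using this
  -- z = U p is a unit vector with ‖z ᵥ* X‖ = lam k
  set z : Fin d → ℝ := U *ᵥ p with hz
  have hznorm : vnorm z = 1 := by rw [hz, vnorm_mulVec_orth hP.1.1, hpnorm]
  have hXform : X = U * H := by
    rw [hHdef, ← Matrix.mul_assoc, hP.1.2, Matrix.one_mul]
  have hvecmul : z ᵥ* X = Xᵀ *ᵥ z := (Matrix.mulVec_transpose X z).symm
  have hXt : Xᵀ = H * Uᵀ := by rw [hXform, Matrix.transpose_mul, hsym]
  have hkey : Xᵀ *ᵥ z = H *ᵥ (Uᵀ *ᵥ z) := by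
    rw [hXt, ← Matrix.mulVec_mulVec]
  have hUtz : Uᵀ *ᵥ z = p := by
    rw [hz, Matrix.mulVec_mulVec, hP.1.1, Matrix.one_mulVec]
  have hfinal : Xᵀ *ᵥ z = lam k • p := by
    rw [hkey, hUtz, heig]
  have hvn : vnorm (z ᵥ* X) = lam k := by
    rw [hvecmul, hfinal, vnorm_smul, hpnorm, mul_one, abs_of_nonneg hlam_nonneg]
  have := sigmaMin_le X hznorm
  rw [hvn] at this
  exact this

end spectral

section integral

lemma integral_rpow_eq {c : ℝ} (hc : 0 < c) : (∫ s in (0:ℝ)..1, s ^ (c - 1)) = 1 / c := by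
  rw [integral_rpow (Or.inl (by linarith))]
  rw [sub_add_cancel, Real.one_rpow, Real.zero_rpow (ne_of_gt hc)]
  norm_num

lemma sylvester_dot_bound {d : ℕ} (C' : Matrix (Fin d) (Fin d) ℝ) (lam mu : Fin d → ℝ)
    (α β B : ℝ) (hl : ∀ i, α ≤ lam i) (hm : ∀ j, β ≤ mu j) (hσ : 0 < α + β)
    (hC : ∀ w z : Fin d → ℝ, vnorm w ≤ 1 → vnorm z ≤ 1 →
      |∑ i, ∑ j, w i * C' i j * z j| ≤ B)
    (v u : Fin d → ℝ) (hv : vnorm v ≤ 1) (hu : vnorm u ≤ 1) :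
    ∑ i, ∑ j, v i * (C' i j / (lam i + mu j)) * u j ≤ B / (α + β) := by
  have hpos : ∀ i j, 0 < lam i + mu j := fun i j => by
    have h1 := hl i; have h2 := hm j; linarith
  have hBnn : 0 ≤ B := by
    have h0 := hC 0 0 (by simp [vnorm]) (by simp [vnorm])
    simpa using (abs_nonneg _).trans h0
  set F : Fin d × Fin d → ℝ → ℝ :=
    fun p s => (v p.1 * C' p.1 p.2 * u p.2) * s ^ (lam p.1 + mu p.2 - 1) with hF
  have hint : ∀ p : Fin d × Fin d, IntervalIntegrable (F p) MeasureTheory.volume 0 1 :=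
    fun p => (intervalIntegral.intervalIntegrable_rpow' (by have := hpos p.1 p.2; linarith)).const_mul _
  have hval : ∀ p : Fin d × Fin d,
      (∫ s in (0:ℝ)..1, F p s) = v p.1 * (C' p.1 p.2 / (lam p.1 + mu p.2)) * u p.2 := by
    intro p
    rw [hF]
    simp only
    rw [intervalIntegral.integral_const_mul]
    have : lam p.1 + mu p.2 - 1 = (lam p.1 + mu p.2) - 1 := by ring
    rw [this, integral_rpow_eq (hpos p.1 p.2)]
    field_simp
  have hsum : (∑ i, ∑ j, v i * (C' i j / (lam i + mu j)) * u j)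
      = ∫ s in (0:ℝ)..1, ∑ p : Fin d × Fin d, F p s := by
    rw [intervalIntegral.integral_finset_sum (fun p _ => hint p)]
    rw [Fintype.sum_prod_type]
    exact Finset.sum_congr rfl fun i _ => Finset.sum_congr rfl fun j _ => (hval (i, j)).symm
  have hbd : ‖∫ s in (0:ℝ)..1, ∑ p : Fin d × Fin d, F p s‖
      ≤ |∫ s in (0:ℝ)..1, B * s ^ (α + β - 1)| := by
    apply intervalIntegral.norm_integral_le_abs_of_norm_le
    · rw [Set.uIoc_of_le (by norm_num : (0:ℝ) ≤ 1)]
      rw [MeasureTheory.ae_restrict_iff' measurableSet_Ioc]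
      filter_upwards with s hs
      have hs0 : (0:ℝ) < s := hs.1
      have hs1 : s ≤ 1 := hs.2
      have hsplit : ∀ p : Fin d × Fin d, F p s
          = s ^ (α + β - 1) *
            ((v p.1 * s ^ (lam p.1 - α)) * C' p.1 p.2 * (u p.2 * s ^ (mu p.2 - β))) := by
        intro p
        rw [hF]
        simp only
        have he : lam p.1 + mu p.2 - 1 = (α + β - 1) + ((lam p.1 - α) + (mu p.2 - β)) := by
          ring
        rw [he, Real.rpow_add hs0, Real.rpow_add hs0]
        ring
      rw [Finset.sum_congr rfl (fun p _ => hsplit p), ← Finset.mul_sum]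
      rw [Real.norm_eq_abs, abs_mul, abs_of_nonneg (Real.rpow_nonneg hs0.le _)]
      rw [mul_comm B (s ^ (α + β - 1))]
      apply mul_le_mul_of_nonneg_left ?_ (Real.rpow_nonneg hs0.le _)
      have hwv : vnorm (fun i => v i * s ^ (lam i - α)) ≤ 1 := by
        refine le_trans (vnorm_mono (fun i2 => ?_)) hv
        rw [abs_mul]
        have h1 : |s ^ (lam i2 - α)| ≤ 1 := by
          rw [abs_of_nonneg (Real.rpow_nonneg hs0.le _)]
          exact Real.rpow_le_one hs0.le hs1 (by have := hl i2; linarith)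
        nlinarith [abs_nonneg (v i2)]
      have hwz : vnorm (fun j => u j * s ^ (mu j - β)) ≤ 1 := by
        refine le_trans (vnorm_mono (fun j2 => ?_)) hu
        rw [abs_mul]
        have h1 : |s ^ (mu j2 - β)| ≤ 1 := by
          rw [abs_of_nonneg (Real.rpow_nonneg hs0.le _)]
          exact Real.rpow_le_one hs0.le hs1 (by have := hm j2; linarith)
        nlinarith [abs_nonneg (u j2)]
      have := hC _ _ hwv hwz
      rw [Fintype.sum_prod_type]
      exact this
    · exact (intervalIntegral.intervalIntegrable_rpow' (by linarith)).const_mul B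
  have hrhs : |∫ s in (0:ℝ)..1, B * s ^ (α + β - 1)| = B / (α + β) := by
    rw [intervalIntegral.integral_const_mul]
    have : α + β - 1 = (α + β) - 1 := by ring
    rw [this, integral_rpow_eq hσ]
    rw [abs_of_nonneg (by positivity)]
    ring
  calc (∑ i, ∑ j, v i * (C' i j / (lam i + mu j)) * u j)
      = ∫ s in (0:ℝ)..1, ∑ p : Fin d × Fin d, F p s := hsum
    _ ≤ ‖∫ s in (0:ℝ)..1, ∑ p : Fin d × Fin d, F p s‖ := by
        rw [Real.norm_eq_abs]; exact le_abs_self _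
    _ ≤ |∫ s in (0:ℝ)..1, B * s ^ (α + β - 1)| := hbd
    _ = B / (α + β) := hrhs

end integral

lemma dot_mulVec_eq_double {d : ℕ} (w : Fin d → ℝ) (M : Matrix (Fin d) (Fin d) ℝ)
    (z : Fin d → ℝ) : w ⬝ᵥ (M *ᵥ z) = ∑ i, ∑ j, w i * M i j * z j := by
  simp only [dotProduct, Matrix.mulVec, Finset.mul_sum]
  apply Finset.sum_congr rfl; intro i _
  apply Finset.sum_congr rfl; intro j _
  ring


/-- Lemma 5.3: Lipschitz continuity of the polar factor map, in operator
norm and in Frobenius norm. -/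
theorem polar_lipschitz (d : ℕ) (X Y : Matrix (Fin d) (Fin d) ℝ)
    (h : 0 < sigmaMin X + sigmaMin Y)
    (RX RY : Matrix (Fin d) (Fin d) ℝ) (hRX : IsPolar X RX) (hRY : IsPolar Y RY) :
    opNorm (RX - RY) ≤ 2 * opNorm (X - Y) / (sigmaMin X + sigmaMin Y) ∧
    frob (RX - RY) ≤ 2 * frob (X - Y) / (sigmaMin X + sigmaMin Y) := by
  obtain ⟨P, lam, hPorth, hHspec, hlam⟩ := polar_spectral hRX
  obtain ⟨Q, mu, hQorth, hKspec, hmu⟩ := polar_spectral hRY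
  set α := sigmaMin X with hα
  set β := sigmaMin Y with hβ
  set U := RX
  set V := RY
  set E := X - Y with hE
  set H := Uᵀ * X with hHdef
  set K := Vᵀ * Y with hKdef
  set Z := (1 : Matrix (Fin d) (Fin d) ℝ) - Uᵀ * V with hZdef
  set C := Uᵀ * E - Eᵀ * V with hCdef
  have hHsym : Hᵀ = H := polar_symm hRX
  have hKsym : Kᵀ = K := polar_symm hRY
  have hXUH : X = U * H := by
    rw [hHdef, ← Matrix.mul_assoc, hRX.1.2, Matrix.one_mul]
  have hYVK : Y = V * K := by
    rw [hKdef, ← Matrix.mul_assoc, hRY.1.2, Matrix.one_mul]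
  -- Sylvester identity
  have hSyl : H * Z + Z * K = C := by
    have h1 : Xᵀ * V = H * (Uᵀ * V) := by
      conv_lhs => rw [hXUH]
      rw [Matrix.transpose_mul, hHsym, Matrix.mul_assoc]
    have h2 : (Uᵀ * V) * K = Uᵀ * Y := by
      conv_rhs => rw [hYVK]
      rw [Matrix.mul_assoc]
    have h3 : Yᵀ * V = K := by
      conv_lhs => rw [hYVK]
      rw [Matrix.transpose_mul, hKsym, Matrix.mul_assoc, hRY.1.1, Matrix.mul_one]
    rw [hZdef, hCdef, hE]
    rw [Matrix.mul_sub, Matrix.sub_mul, Matrix.mul_one, Matrix.one_mul]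
    rw [Matrix.mul_sub, Matrix.transpose_sub, Matrix.sub_mul]
    rw [h1, h2, h3, hHdef]
    abel
  set Z' := Pᵀ * Z * Q with hZ'def
  set C' := Pᵀ * C * Q with hC'def
  -- diagonalized Sylvester equation
  have hdiag : Matrix.diagonal lam * Z' + Z' * Matrix.diagonal mu = C' := by
    have e1 : Pᵀ * H = Matrix.diagonal lam * Pᵀ := by
      rw [hHspec, ← Matrix.mul_assoc, ← Matrix.mul_assoc, hPorth.1, Matrix.one_mul]
    have e2 : K * Q = Q * Matrix.diagonal mu := by
      rw [hKspec, Matrix.mul_assoc, hQorth.1, Matrix.mul_one]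
    have : Pᵀ * (H * Z + Z * K) * Q = Pᵀ * C * Q := by rw [hSyl]
    calc Matrix.diagonal lam * Z' + Z' * Matrix.diagonal mu
        = (Matrix.diagonal lam * Pᵀ) * Z * Q + Pᵀ * Z * (Q * Matrix.diagonal mu) := by
          rw [hZ'def]
          simp only [Matrix.mul_assoc]
      _ = (Pᵀ * H) * Z * Q + Pᵀ * Z * (K * Q) := by rw [e1, e2]
      _ = Pᵀ * (H * Z + Z * K) * Q := by
          rw [Matrix.mul_add, Matrix.add_mul]
          simp only [Matrix.mul_assoc]
      _ = C' := by rw [hSyl, hC'def]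
  have hposlm : ∀ i j, 0 < lam i + mu j := fun i j => by
    have h1 := hlam i; have h2 := hmu j; linarith
  have hent : ∀ i j, Z' i j = C' i j / (lam i + mu j) := by
    intro i j
    have heq : (Matrix.diagonal lam * Z' + Z' * Matrix.diagonal mu) i j = C' i j := by
      rw [hdiag]
    simp only [Matrix.add_apply, Matrix.diagonal_mul, Matrix.mul_diagonal] at heq
    rw [eq_div_iff (ne_of_gt (hposlm i j))]
    nlinarith [heq]
  -- bilinear bound on C'
  have hvnP : ∀ w : Fin d → ℝ, vnorm (P *ᵥ w) = vnorm w := fun w =>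
    vnorm_mulVec_orth hPorth.1 w
  have hvnQ : ∀ w : Fin d → ℝ, vnorm (Q *ᵥ w) = vnorm w := fun w =>
    vnorm_mulVec_orth hQorth.1 w
  have hvnU : ∀ w : Fin d → ℝ, vnorm (U *ᵥ w) = vnorm w := fun w =>
    vnorm_mulVec_orth hRX.1.1 w
  have hvnV : ∀ w : Fin d → ℝ, vnorm (V *ᵥ w) = vnorm w := fun w =>
    vnorm_mulVec_orth hRY.1.1 w
  have hCb : ∀ w z : Fin d → ℝ, vnorm w ≤ 1 → vnorm z ≤ 1 →
      |∑ i, ∑ j, w i * C' i j * z j| ≤ 2 * opNorm E := by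
    intro w z hw hz
    rw [← dot_mulVec_eq_double]
    have step1 : C' *ᵥ z = Pᵀ *ᵥ (C *ᵥ (Q *ᵥ z)) := by
      rw [hC'def, ← Matrix.mulVec_mulVec, ← Matrix.mulVec_mulVec]
    have step2 : w ⬝ᵥ (Pᵀ *ᵥ (C *ᵥ (Q *ᵥ z))) = (P *ᵥ w) ⬝ᵥ (C *ᵥ (Q *ᵥ z)) := by
      rw [dotProduct_mulVec w Pᵀ, Matrix.vecMul_transpose]
    set a := P *ᵥ w with hadef
    set b := Q *ᵥ z with hbdef
    have ha1 : vnorm a ≤ 1 := by rw [hadef, hvnP]; exact hw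
    have hb1 : vnorm b ≤ 1 := by rw [hbdef, hvnQ]; exact hz
    have split : C *ᵥ b = Uᵀ *ᵥ (E *ᵥ b) - Eᵀ *ᵥ (V *ᵥ b) := by
      rw [hCdef, Matrix.sub_mulVec, ← Matrix.mulVec_mulVec, ← Matrix.mulVec_mulVec]
    have term1 : a ⬝ᵥ (Uᵀ *ᵥ (E *ᵥ b)) = (U *ᵥ a) ⬝ᵥ (E *ᵥ b) := by
      rw [dotProduct_mulVec a Uᵀ, Matrix.vecMul_transpose]
    have term2 : a ⬝ᵥ (Eᵀ *ᵥ (V *ᵥ b)) = (E *ᵥ a) ⬝ᵥ (V *ᵥ b) := by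
      rw [dotProduct_mulVec a Eᵀ, Matrix.vecMul_transpose]
    rw [step1, step2, split, dotProduct_sub, term1, term2]
    have hEb : vnorm (E *ᵥ b) ≤ opNorm E := by
      calc vnorm (E *ᵥ b) ≤ opNorm E * vnorm b := vnorm_mulVec_le_opNorm' E b
        _ ≤ opNorm E * 1 := by
            apply mul_le_mul_of_nonneg_left hb1 (opNorm_nonneg E)
        _ = opNorm E := mul_one _
    have hEa : vnorm (E *ᵥ a) ≤ opNorm E := by
      calc vnorm (E *ᵥ a) ≤ opNorm E * vnorm a := vnorm_mulVec_le_opNorm' E a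
        _ ≤ opNorm E * 1 := by
            apply mul_le_mul_of_nonneg_left ha1 (opNorm_nonneg E)
        _ = opNorm E := mul_one _
    have b1 : |(U *ᵥ a) ⬝ᵥ (E *ᵥ b)| ≤ opNorm E := by
      calc |(U *ᵥ a) ⬝ᵥ (E *ᵥ b)| ≤ vnorm (U *ᵥ a) * vnorm (E *ᵥ b) := abs_dot_le _ _
        _ ≤ 1 * opNorm E := by
            apply mul_le_mul ?_ hEb (vnorm_nonneg _) (by norm_num)
            rw [hvnU]; exact ha1
        _ = opNorm E := one_mul _
    have b2 : |(E *ᵥ a) ⬝ᵥ (V *ᵥ b)| ≤ opNorm E := by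
      calc |(E *ᵥ a) ⬝ᵥ (V *ᵥ b)| ≤ vnorm (E *ᵥ a) * vnorm (V *ᵥ b) := abs_dot_le _ _
        _ ≤ opNorm E * 1 := by
            apply mul_le_mul hEa ?_ (vnorm_nonneg _) (opNorm_nonneg _)
            rw [hvnV]; exact hb1
        _ = opNorm E := mul_one _
    calc |(U *ᵥ a) ⬝ᵥ (E *ᵥ b) - (E *ᵥ a) ⬝ᵥ (V *ᵥ b)|
        ≤ |(U *ᵥ a) ⬝ᵥ (E *ᵥ b)| + |(E *ᵥ a) ⬝ᵥ (V *ᵥ b)| := abs_sub _ _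
      _ ≤ opNorm E + opNorm E := add_le_add b1 b2
      _ = 2 * opNorm E := by ring
  -- vnorm bound for Z'
  have hZ'vec : ∀ u : Fin d → ℝ, vnorm u ≤ 1 →
      vnorm (Z' *ᵥ u) ≤ 2 * opNorm E / (α + β) := by
    intro u hu
    have hdot : ∀ v : Fin d → ℝ, vnorm v ≤ 1 →
        v ⬝ᵥ (Z' *ᵥ u) ≤ 2 * opNorm E / (α + β) := by
      intro v hv
      rw [dot_mulVec_eq_double]
      have := sylvester_dot_bound C' lam mu α β (2 * opNorm E)
        (fun i => hlam i) (fun j => hmu j) h hCb v u hv hu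
      calc ∑ i, ∑ j, v i * Z' i j * u j
          = ∑ i, ∑ j, v i * (C' i j / (lam i + mu j)) * u j := by
            apply Finset.sum_congr rfl; intro i _
            apply Finset.sum_congr rfl; intro j _
            rw [hent i j]
        _ ≤ 2 * opNorm E / (α + β) := this
    rcases eq_or_ne (vnorm (Z' *ᵥ u)) 0 with h0 | h0
    · rw [h0]
      apply div_nonneg ?_ h.le
      nlinarith [opNorm_nonneg E]
    · have hpos0 : 0 < vnorm (Z' *ᵥ u) := lt_of_le_of_ne (vnorm_nonneg _) (Ne.symm h0)
      set y := Z' *ᵥ u with hy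
      have hv1 : vnorm ((vnorm y)⁻¹ • y) ≤ 1 := by
        rw [vnorm_smul, abs_of_pos (by positivity)]
        rw [inv_mul_cancel₀ h0]
      have := hdot ((vnorm y)⁻¹ • y) hv1
      rw [smul_dotProduct] at this
      have hyy : y ⬝ᵥ y = vnorm y ^ 2 := (vnorm_sq y).symm
      rw [hyy] at this
      have heq : (vnorm y)⁻¹ • vnorm y ^ 2 = vnorm y := by
        rw [smul_eq_mul, sq, ← mul_assoc, inv_mul_cancel₀ h0, one_mul]
      rw [heq] at this
      exact this
  -- structural identities
  have hUV : U - V = U * Z := by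
    rw [hZdef, Matrix.mul_sub, Matrix.mul_one, ← Matrix.mul_assoc, hRX.1.2, Matrix.one_mul]
  have hZPZ : Z = P * Z' * Qᵀ := by
    rw [hZ'def]
    calc Z = (P * Pᵀ) * Z * (Q * Qᵀ) := by rw [hPorth.2, hQorth.2]; simp
      _ = P * (Pᵀ * Z * Q) * Qᵀ := by simp only [Matrix.mul_assoc]
  constructor
  · -- operator norm bound
    apply opNorm_le ?_ (div_nonneg (by nlinarith [opNorm_nonneg E]) h.le)
    intro u hu
    have e1 : (U - V) *ᵥ u = U *ᵥ (Z *ᵥ u) := by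
      rw [hUV, ← Matrix.mulVec_mulVec]
    have e2 : Z *ᵥ u = P *ᵥ (Z' *ᵥ (Qᵀ *ᵥ u)) := by
      rw [hZPZ, ← Matrix.mulVec_mulVec, ← Matrix.mulVec_mulVec]
    have hu' : vnorm (Qᵀ *ᵥ u) ≤ 1 := by
      have : vnorm (Qᵀ *ᵥ u) = vnorm u := by
        apply vnorm_mulVec_orth
        rw [Matrix.transpose_transpose, hQorth.2]
      rw [this, hu]
    calc vnorm ((U - V) *ᵥ u) = vnorm (Z *ᵥ u) := by rw [e1, hvnU]
      _ = vnorm (Z' *ᵥ (Qᵀ *ᵥ u)) := by rw [e2, hvnP]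
      _ ≤ 2 * opNorm E / (α + β) := hZ'vec _ hu'
  · -- Frobenius bound
    have f1 : frob (U - V) = frob Z := by
      rw [hUV, frob_mul_orthL hRX.1.1]
    have f2 : frob Z = frob Z' := by
      rw [hZPZ]
      rw [frob_mul_orthR (show Qᵀ * (Qᵀ)ᵀ = 1 by rw [Matrix.transpose_transpose, hQorth.1])]
      rw [frob_mul_orthL hPorth.1]
    have f3 : frob Z' ≤ frob C' / (α + β) := by
      rw [frob, frob]
      have hsum : (∑ i, ∑ j, Z' i j ^ 2)
          ≤ (∑ i, ∑ j, C' i j ^ 2) * ((α + β)⁻¹) ^ 2 := by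
        rw [Finset.sum_mul]
        apply Finset.sum_le_sum; intro i _
        rw [Finset.sum_mul]
        apply Finset.sum_le_sum; intro j _
        rw [hent i j, div_pow, inv_pow, ← div_eq_mul_inv]
        apply div_le_div_of_nonneg_left (sq_nonneg _) (by positivity)
        apply pow_le_pow_left₀ h.le ?_ 2
        have h1 := hlam i; have h2 := hmu j; linarith
      calc Real.sqrt (∑ i, ∑ j, Z' i j ^ 2)
          ≤ Real.sqrt ((∑ i, ∑ j, C' i j ^ 2) * ((α + β)⁻¹) ^ 2) := Real.sqrt_le_sqrt hsum
        _ = Real.sqrt (∑ i, ∑ j, C' i j ^ 2) * (α + β)⁻¹ := by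
            rw [Real.sqrt_mul (by positivity), Real.sqrt_sq (by positivity)]
        _ = Real.sqrt (∑ i, ∑ j, C' i j ^ 2) / (α + β) := by rw [div_eq_mul_inv]
    have f4 : frob C' = frob C := by
      rw [hC'def]
      rw [frob_mul_orthR hQorth.2]
      rw [frob_mul_orthL (show (Pᵀ)ᵀ * Pᵀ = 1 by rw [Matrix.transpose_transpose, hPorth.2])]
    have f5 : frob C ≤ 2 * frob E := by
      have t1 : frob (Uᵀ * E) = frob E :=
        frob_mul_orthL (show (Uᵀ)ᵀ * Uᵀ = 1 by rw [Matrix.transpose_transpose, hRX.1.2]) E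
      have t2 : frob (Eᵀ * V) = frob E := by
        rw [frob_mul_orthR hRY.1.2, frob_transpose]
      calc frob C ≤ frob (Uᵀ * E) + frob (Eᵀ * V) := frob_sub_le _ _
        _ = 2 * frob E := by rw [t1, t2]; ring
    calc frob (U - V) = frob Z' := by rw [f1, f2]
      _ ≤ frob C' / (α + β) := f3
      _ = frob C / (α + β) := by rw [f4]
      _ ≤ 2 * frob E / (α + β) := by
          gcongr
      _ = 2 * frob (X - Y) / (sigmaMin X + sigmaMin Y) := rfl


end GOPP
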